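/- Let p be an even probability measure on ℤ satisfying p(m) > 2·∑_{n=m+1}^∞ p(n) for all m ≥ 0. For each radius r and each ν ∈ {0,...,2·3^r - 1}, writing ν in the form ν = x₀·3^r + ∑_{k=1}^r c_k·3^{r-k} with x₀ ∈ {0,1} and c_k ∈ {0,1,2}, define ξ_min(ν) = x₀·p(0) + ∑_{k=1}^r c_k·p(k) and ξ_max(ν) = ξ_min(ν) + 2·∑_{n=r+1}^∞ p(n). Then the intervals [ξ_min(ν), ξ_max(ν)] for ν = 0,...,2·3^r - 1 are pairwise disjoint and ordered: ξ_max(ν) < ξ_min(ν+1) for all ν < 2·3^r - 1. -/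

import Mathlib

private lemma geom_aux3 (n : ℕ) : ∑ i ∈ Finset.range n, 2 * 3 ^ i < 3 ^ n := by
  induction n with
  | zero => simp
  | succ n ih => rw [Finset.sum_range_succ, pow_succ]; omega

private lemma split_aux {M : Type*} [AddCommMonoid M] {r j : ℕ} (hj : j ≤ r) (f : ℕ → M) :
    ∑ k ∈ Finset.range (r + 1), f k
      = ∑ k ∈ Finset.range j, f k + f j + ∑ k ∈ Finset.Ioc j r, f k := by
  have h1 : Finset.Ioc j r = Finset.Ico (j + 1) (r + 1) := by
    rw [Finset.Ico_add_one_right_eq_Icc, Finset.Icc_add_one_left_eq_Ioc]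
  have h2 : ∑ k ∈ Finset.Ico j (r + 1), f k = f j + ∑ k ∈ Finset.Ico (j + 1) (r + 1), f k :=
    Finset.sum_eq_sum_Ico_succ_bot (by omega) f
  rw [h1, Finset.range_eq_Ico, ← Finset.sum_Ico_consecutive f (Nat.zero_le j) (by omega), h2,
    ← Finset.range_eq_Ico, add_assoc]

private lemma tail_aux {r j : ℕ} (hj : j ≤ r) (g : ℕ → ℕ) (hg : ∀ k, g k ≤ 2) :
    ∑ k ∈ Finset.Ioc j r, g k * 3 ^ (r - k) < 3 ^ (r - j) := by
  have h1 : Finset.Ioc j r = Finset.Ico (j + 1) (r + 1) := by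
    rw [Finset.Ico_add_one_right_eq_Icc, Finset.Icc_add_one_left_eq_Ioc]
  calc ∑ k ∈ Finset.Ioc j r, g k * 3 ^ (r - k)
      ≤ ∑ k ∈ Finset.Ioc j r, 2 * 3 ^ (r - k) :=
        Finset.sum_le_sum fun k _ => Nat.mul_le_mul_right _ (hg k)
    _ = ∑ i ∈ Finset.range (r - j), 2 * 3 ^ (r - j - 1 - i) := by
        rw [h1, Finset.sum_Ico_eq_sum_range]
        rw [show r + 1 - (j + 1) = r - j by omega]
        exact Finset.sum_congr rfl fun i _ => by rw [show r - (j + 1 + i) = r - j - 1 - i by omega]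
    _ = ∑ i ∈ Finset.range (r - j), 2 * 3 ^ i := Finset.sum_range_reflect (fun i => 2 * 3 ^ i) _
    _ < 3 ^ (r - j) := geom_aux3 _

theorem stmt_3 (p : ℤ → ℝ) (hnn : ∀ n, 0 ≤ p n) (heven : ∀ n, p (-n) = p n)
    (hsumm : Summable p) (hsum : ∑' n : ℤ, p n = 1)
    (hgap : ∀ m : ℕ, p (m : ℤ) > 2 * ∑' n : ℕ, p ((m : ℤ) + 1 + n))
    (r : ℕ) (x₀ y₀ : ℕ) (hx₀ : x₀ ≤ 1) (hy₀ : y₀ ≤ 1)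
    (c d : ℕ → ℕ) (hc : ∀ k, c k ≤ 2) (hd : ∀ k, d k ≤ 2)
    (hlt : x₀ * 3 ^ r + ∑ k ∈ Finset.Icc 1 r, c k * 3 ^ (r - k)
         < y₀ * 3 ^ r + ∑ k ∈ Finset.Icc 1 r, d k * 3 ^ (r - k)) :
    ((x₀ : ℝ) * p 0 + ∑ k ∈ Finset.Icc 1 r, (c k : ℝ) * p (k : ℤ))
        + 2 * ∑' n : ℕ, p ((r : ℤ) + 1 + n)
      < (y₀ : ℝ) * p 0 + ∑ k ∈ Finset.Icc 1 r, (d k : ℝ) * p (k : ℤ) := by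
  classical
  set q : ℕ → ℝ := fun k => p (k : ℤ) with hq
  set a : ℕ → ℕ := fun k => if k = 0 then x₀ else c k with ha_def
  set b : ℕ → ℕ := fun k => if k = 0 then y₀ else d k with hb_def
  have ha2 : ∀ k, a k ≤ 2 := by
    intro k
    simp only [ha_def]
    split
    · omega
    · exact hc k
  have hb2 : ∀ k, b k ≤ 2 := by
    intro k
    simp only [hb_def]
    split
    · omega
    · exact hd k
  have hrange : Finset.range (r + 1) = insert 0 (Finset.Icc 1 r) := by
    ext k; simp only [Finset.mem_range, Finset.mem_insert, Finset.mem_Icc]; omega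
  have hnot : (0 : ℕ) ∉ Finset.Icc 1 r := by simp
  -- rewrite hlt as full range sums
  have hν : ∑ k ∈ Finset.range (r + 1), a k * 3 ^ (r - k)
      < ∑ k ∈ Finset.range (r + 1), b k * 3 ^ (r - k) := by
    rw [hrange, Finset.sum_insert hnot, Finset.sum_insert hnot]
    have h1 : ∀ k ∈ Finset.Icc 1 r, a k * 3 ^ (r - k) = c k * 3 ^ (r - k) := by
      intro k hk
      rw [Finset.mem_Icc] at hk
      have hk0 : k ≠ 0 := by omega
      simp [ha_def, hk0]
    have h2 : ∀ k ∈ Finset.Icc 1 r, b k * 3 ^ (r - k) = d k * 3 ^ (r - k) := by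
      intro k hk
      rw [Finset.mem_Icc] at hk
      have hk0 : k ≠ 0 := by omega
      simp [hb_def, hk0]
    rw [Finset.sum_congr rfl h1, Finset.sum_congr rfl h2]
    simpa [ha_def, hb_def] using hlt
  -- first differing digit
  have hex : ∃ j, a j ≠ b j := by
    by_contra h
    push_neg at h
    rw [Finset.sum_congr rfl fun k _ => by rw [h k]] at hν
    exact lt_irrefl _ hν
  set j := Nat.find hex with hj_def
  have hjne : a j ≠ b j := Nat.find_spec hex
  have hpre : ∀ k < j, a k = b k := fun k hk => by
    by_contra h; exact Nat.find_min hex hk h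
  have hjr : j ≤ r := by
    by_contra h
    push_neg at h
    have heq : ∑ k ∈ Finset.range (r + 1), a k * 3 ^ (r - k)
        = ∑ k ∈ Finset.range (r + 1), b k * 3 ^ (r - k) :=
      Finset.sum_congr rfl fun k hk => by
        rw [hpre k (lt_of_lt_of_le (Finset.mem_range.mp hk) h)]
    omega
  have hj : a j < b j := by
    rcases lt_or_gt_of_ne hjne with h | h
    · exact h
    · exfalso
      have hP : ∑ k ∈ Finset.range j, a k * 3 ^ (r - k)
          = ∑ k ∈ Finset.range j, b k * 3 ^ (r - k) :=
        Finset.sum_congr rfl fun k hk => by rw [hpre k (Finset.mem_range.mp hk)]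
      rw [split_aux hjr, split_aux hjr, hP] at hν
      have hta := tail_aux hjr a ha2
      have htb := tail_aux hjr b hb2
      have hmul : (b j + 1) * 3 ^ (r - j) ≤ a j * 3 ^ (r - j) :=
        Nat.mul_le_mul_right _ h
      rw [add_mul, one_mul] at hmul
      omega
  -- summability of tails
  have hsummtail : ∀ m : ℕ, Summable (fun n : ℕ => p ((m : ℤ) + 1 + n)) := by
    intro m
    have hi : Function.Injective (fun n : ℕ => (m : ℤ) + 1 + n) := by
      intro x y hxy
      simp only at hxy
      omega
    exact hsumm.comp_injective hi
  -- split the gap tsum at r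
  have hfeq : (fun n : ℕ => p ((j : ℤ) + 1 + ↑(n + (r - j)))) = fun n : ℕ => p ((r : ℤ) + 1 + n) := by
    funext n
    congr 1
    push_cast [Nat.cast_sub hjr]
    ring
  have hsplitsum : ∑' n : ℕ, p ((j : ℤ) + 1 + n)
      = ∑ i ∈ Finset.range (r - j), q (j + 1 + i) + ∑' n : ℕ, p ((r : ℤ) + 1 + n) := by
    have hs2 : Summable (fun n : ℕ => p ((j : ℤ) + 1 + ↑(n + (r - j)))) := by
      rw [hfeq]; exact hsummtail r
    have h1 := Summable.sum_add_tsum_nat_add' (f := fun n : ℕ => p ((j : ℤ) + 1 + n)) (k := r - j) hs2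
    rw [← h1, hfeq]
    have : ∀ i : ℕ, (fun n : ℕ => p ((j : ℤ) + 1 + n)) i = q (j + 1 + i) := by
      intro i; simp only [hq]; norm_cast
    rw [Finset.sum_congr rfl fun i _ => this i]
  -- the interval sums as range sums
  have hX : (x₀ : ℝ) * p 0 + ∑ k ∈ Finset.Icc 1 r, (c k : ℝ) * p (k : ℤ)
      = ∑ k ∈ Finset.range (r + 1), (a k : ℝ) * q k := by
    rw [hrange, Finset.sum_insert hnot]
    have h1 : ∀ k ∈ Finset.Icc 1 r, (a k : ℝ) * q k = (c k : ℝ) * p (k : ℤ) := by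
      intro k hk
      rw [Finset.mem_Icc] at hk
      have hk0 : k ≠ 0 := by omega
      simp [ha_def, hq, hk0]
    rw [Finset.sum_congr rfl h1]
    simp [ha_def, hq]
  have hY : (y₀ : ℝ) * p 0 + ∑ k ∈ Finset.Icc 1 r, (d k : ℝ) * p (k : ℤ)
      = ∑ k ∈ Finset.range (r + 1), (b k : ℝ) * q k := by
    rw [hrange, Finset.sum_insert hnot]
    have h1 : ∀ k ∈ Finset.Icc 1 r, (b k : ℝ) * q k = (d k : ℝ) * p (k : ℤ) := by
      intro k hk
      rw [Finset.mem_Icc] at hk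
      have hk0 : k ≠ 0 := by omega
      simp [hb_def, hq, hk0]
    rw [Finset.sum_congr rfl h1]
    simp [hb_def, hq]
  rw [hX, hY, split_aux hjr (fun k => (a k : ℝ) * q k), split_aux hjr (fun k => (b k : ℝ) * q k)]
  have hP : ∑ k ∈ Finset.range j, (a k : ℝ) * q k = ∑ k ∈ Finset.range j, (b k : ℝ) * q k :=
    Finset.sum_congr rfl fun k hk => by rw [hpre k (Finset.mem_range.mp hk)]
  rw [hP]
  -- key analytic facts
  have hqnn : ∀ k : ℕ, 0 ≤ q k := fun k => hnn _
  have hIocEq : ∑ i ∈ Finset.range (r - j), q (j + 1 + i) = ∑ k ∈ Finset.Ioc j r, q k := by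
    have h1 : Finset.Ioc j r = Finset.Ico (j + 1) (r + 1) := by
      rw [Finset.Ico_add_one_right_eq_Icc, Finset.Icc_add_one_left_eq_Ioc]
    rw [h1, Finset.sum_Ico_eq_sum_range, show r + 1 - (j + 1) = r - j by omega]
  have hgapj := hgap j
  rw [hsplitsum, hIocEq] at hgapj
  have hSa : ∑ k ∈ Finset.Ioc j r, (a k : ℝ) * q k ≤ 2 * ∑ k ∈ Finset.Ioc j r, q k := by
    rw [Finset.mul_sum]
    refine Finset.sum_le_sum fun k _ => ?_
    have : (a k : ℝ) ≤ 2 := by exact_mod_cast ha2 k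
    exact mul_le_mul_of_nonneg_right this (hqnn k)
  have hSb : (0 : ℝ) ≤ ∑ k ∈ Finset.Ioc j r, (b k : ℝ) * q k :=
    Finset.sum_nonneg fun k _ => mul_nonneg (Nat.cast_nonneg _) (hqnn k)
  have hbj : (a j : ℝ) + 1 ≤ (b j : ℝ) := by exact_mod_cast hj
  have hmul : ((a j : ℝ) + 1) * q j ≤ (b j : ℝ) * q j :=
    mul_le_mul_of_nonneg_right hbj (hqnn j)
  have hqj : q j = p (j : ℤ) := rfl
  rw [← hqj] at hgapj
  nlinarith [hgapj, hSa, hSb, hmul, hqnn j]
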